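/- Let (Ψ(t))_{t ≥ 1} and (Z(t))_{t ≥ 1} be adapted processes with respect to a filtration (F_t), with Ψ(1) = 0 and Z(t) ≥ 0 for all t. Suppose there exist positive constants κ, δ, B with δ ≤ 2κ such that: (i) |Ψ(t+1) − Ψ(t)| ≤ κ almost surely; (ii) E[Ψ(t+1) − Ψ(t) | F_t] ≤ −δ + Z(t) on the event {Ψ(t) ≥ B}; (iii) Z(t) ≤ κ almost surely. Then for every t ≥ 1, E[Ψ(t)] ≤ 4κ + B + 2κ²/δ + E[∑_{τ=1}^{t−1} Z(τ)]. -/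

import Mathlib

open MeasureTheory

namespace DriftAux12

/-- Backward certificate function for the drift lemma. -/
noncomputable def F (κ δ : ℝ) : ℕ → ℝ → ℝ
  | 0, v => max v 0
  | u+1, v => (2*κ - δ)/(3*κ) * F κ δ u (max v 0 + κ)
      + (κ + δ)/(3*κ) * F κ δ u (max (v - 2*κ) 0)

section basic

variable {κ δ : ℝ}

lemma hp (hκ : 0 < κ) (hδκ : δ ≤ 2*κ) : 0 ≤ (2*κ - δ)/(3*κ) := by
  apply div_nonneg <;> linarith

lemma hq (hκ : 0 < κ) (hδ : 0 ≤ δ) : 0 ≤ (κ + δ)/(3*κ) := by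
  apply div_nonneg <;> linarith

lemma hpq (hκ : 0 < κ) : (2*κ - δ)/(3*κ) + (κ + δ)/(3*κ) = 1 := by
  have : (3:ℝ)*κ ≠ 0 := by positivity
  field_simp
  ring

lemma F_nonneg (hκ : 0 < κ) (hδ : 0 ≤ δ) (hδκ : δ ≤ 2*κ) :
    ∀ u v, 0 ≤ F κ δ u v := by
  intro u
  induction u with
  | zero => intro v; simp [F]
  | succ u ih =>
    intro v
    simp only [F]
    have h1 := ih (max v 0 + κ)
    have h2 := ih (max (v - 2*κ) 0)
    have h3 := hp hκ hδκ
    have h4 := hq hκ hδ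
    positivity
    
lemma F_mono (hκ : 0 < κ) (hδ : 0 ≤ δ) (hδκ : δ ≤ 2*κ) :
    ∀ u, Monotone (F κ δ u) := by
  intro u
  induction u with
  | zero => intro v w h; simp only [F]; exact max_le_max h le_rfl
  | succ u ih =>
    intro v w h
    simp only [F]
    have h1 : max v 0 + κ ≤ max w 0 + κ := by
      have := max_le_max h (le_refl (0:ℝ)); linarith
    have h2 : max (v - 2*κ) 0 ≤ max (w - 2*κ) 0 :=
      max_le_max (by linarith) le_rfl
    have e1 := ih h1
    have e2 := ih h2
    have h3 := hp hκ hδκ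
    have h4 := hq hκ hδ
    nlinarith

lemma F_cont : ∀ u, Continuous (F κ δ u) := by
  intro u
  induction u with
  | zero => simpa [F] using (continuous_id.max continuous_const)
  | succ u ih =>
    simp only [F]
    fun_prop

lemma F_le (hκ : 0 < κ) (hδ : 0 ≤ δ) (hδκ : δ ≤ 2*κ) :
    ∀ u v, F κ δ u v ≤ max v 0 + u * κ := by
  intro u
  induction u with
  | zero => intro v; simp [F]
  | succ u ih =>
    intro v
    simp only [F]
    have hb1 : F κ δ u (max v 0 + κ) ≤ max v 0 + κ + u * κ := by
      have h := ih (max v 0 + κ)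
      have hmm : max (max v 0 + κ) 0 = max v 0 + κ := by
        apply max_eq_left
        have : (0:ℝ) ≤ max v 0 := le_max_right _ _
        linarith
      rw [hmm] at h; linarith
    have hb2 : F κ δ u (max (v - 2*κ) 0) ≤ max v 0 + u * κ := by
      have h := ih (max (v - 2*κ) 0)
      rw [max_eq_left (le_max_right _ _)] at h
      have h3 : max (v - 2*κ) 0 ≤ max v 0 := by
        apply max_le _ (le_max_right _ _)
        have : v - 2*κ ≤ v := by linarith
        exact this.trans (le_max_left _ _)
      linarith
    have h3 := hp hκ hδκ
    have h4 := hq hκ hδ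
    have h5 := hpq (κ := κ) (δ := δ) hκ
    have hnn := F_nonneg hκ hδ hδκ u (max v 0 + κ)
    have hnn2 := F_nonneg hκ hδ hδκ u (max (v - 2*κ) 0)
    push_cast
    nlinarith

/-- convexity of `F` in the space variable. -/
lemma F_convex (hκ : 0 < κ) (hδ : 0 ≤ δ) (hδκ : δ ≤ 2*κ) :
    ∀ u (a b y z : ℝ), 0 ≤ a → 0 ≤ b → a + b = 1 →
      F κ δ u (a*y + b*z) ≤ a * F κ δ u y + b * F κ δ u z := by
  intro u
  induction u with
  | zero =>
    intro a b y z ha hb hab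
    simp only [F]
    apply max_le
    · have h1 : a * y ≤ a * max y 0 := by
        have := le_max_left y 0; nlinarith
      have h2 : b * z ≤ b * max z 0 := by
        have := le_max_left z 0; nlinarith
      linarith
    · have h1 : 0 ≤ a * max y 0 := by positivity
      have h2 : 0 ≤ b * max z 0 := by positivity
      linarith
  | succ u ih =>
    intro a b y z ha hb hab
    simp only [F]
    have hmax1 : max (a*y + b*z) 0 + κ ≤ a * (max y 0 + κ) + b * (max z 0 + κ) := by
      have h0 : max (a*y + b*z) 0 ≤ a * max y 0 + b * max z 0 := by
        apply max_le
        · have h1 : a * y ≤ a * max y 0 := by have := le_max_left y 0; nlinarith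
          have h2 : b * z ≤ b * max z 0 := by have := le_max_left z 0; nlinarith
          linarith
        · have h1 : 0 ≤ a * max y 0 := by positivity
          have h2 : 0 ≤ b * max z 0 := by positivity
          linarith
      nlinarith [h0]
    have hmax2 : max (a*y + b*z - 2*κ) 0 ≤ a * max (y - 2*κ) 0 + b * max (z - 2*κ) 0 := by
      apply max_le
      · have h1 : a * (y - 2*κ) ≤ a * max (y - 2*κ) 0 := by
          have := le_max_left (y - 2*κ) 0; nlinarith
        have h2 : b * (z - 2*κ) ≤ b * max (z - 2*κ) 0 := by
          have := le_max_left (z - 2*κ) 0; nlinarith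
        nlinarith
      · have h1 : 0 ≤ a * max (y - 2*κ) 0 := by positivity
        have h2 : 0 ≤ b * max (z - 2*κ) 0 := by positivity
        linarith
    have hm := F_mono hκ hδ hδκ u
    have e1 : F κ δ u (max (a*y + b*z) 0 + κ)
        ≤ a * F κ δ u (max y 0 + κ) + b * F κ δ u (max z 0 + κ) :=
      (hm hmax1).trans (ih a b _ _ ha hb hab)
    have e2 : F κ δ u (max (a*y + b*z - 2*κ) 0)
        ≤ a * F κ δ u (max (y - 2*κ) 0) + b * F κ δ u (max (z - 2*κ) 0) :=
      (hm hmax2).trans (ih a b _ _ ha hb hab)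
    have h3 := hp hκ hδκ
    have h4 := hq hκ hδ
    nlinarith [e1, e2]

/-- chord bound, in a form linear in the increment `x`. -/
lemma F_chord (hκ : 0 < κ) (hδ : 0 ≤ δ) (hδκ : δ ≤ 2*κ)
    (u : ℕ) (r x : ℝ) (hr : 0 ≤ r) (hx1 : -(2*κ) ≤ x) (hx2 : x ≤ κ) :
    F κ δ u (max (r + x) 0)
      ≤ (κ * F κ δ u (max (r - 2*κ) 0) + 2*κ * F κ δ u (r + κ)) / (3*κ)
        + x * ((F κ δ u (r + κ) - F κ δ u (max (r - 2*κ) 0)) / (3*κ)) := by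
  have hκ' : κ ≠ 0 := ne_of_gt hκ
  have h3 : (0:ℝ) < 3*κ := by linarith
  have ha : 0 ≤ (κ - x)/(3*κ) := by apply div_nonneg <;> linarith
  have hb : 0 ≤ (x + 2*κ)/(3*κ) := by apply div_nonneg <;> linarith
  have hab : (κ - x)/(3*κ) + (x + 2*κ)/(3*κ) = 1 := by
    field_simp
    ring
  have key : max (r + x) 0
      ≤ (κ - x)/(3*κ) * max (r - 2*κ) 0 + (x + 2*κ)/(3*κ) * (r + κ) := by
    apply max_le
    · have h1 : r + x = (κ - x)/(3*κ) * (r - 2*κ) + (x + 2*κ)/(3*κ) * (r + κ) := by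
        field_simp
        ring
      have h2 : (κ - x)/(3*κ) * (r - 2*κ) ≤ (κ - x)/(3*κ) * max (r - 2*κ) 0 := by
        have := le_max_left (r - 2*κ) 0
        nlinarith
      linarith [h1, h2]
    · have h1 : 0 ≤ (κ - x)/(3*κ) * max (r - 2*κ) 0 := by positivity
      have h2 : 0 ≤ (x + 2*κ)/(3*κ) * (r + κ) := by positivity
      linarith
  have hm := F_mono hκ hδ hδκ u
  have e1 : F κ δ u (max (r + x) 0)
      ≤ (κ - x)/(3*κ) * F κ δ u (max (r - 2*κ) 0) + (x + 2*κ)/(3*κ) * F κ δ u (r + κ) :=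
    (hm key).trans (F_convex hκ hδ hδκ u _ _ _ _ ha hb hab)
  have rearr : ∀ Y Z : ℝ, (κ - x)/(3*κ) * Y + (x + 2*κ)/(3*κ) * Z
      = (κ * Y + 2*κ * Z) / (3*κ) + x * ((Z - Y) / (3*κ)) := by
    intro Y Z
    field_simp
    ring
  rw [rearr] at e1
  exact e1

end basic

section lattice

variable {κ δ : ℝ}

/-- lattice values of `F`. -/
noncomputable def fL (κ δ : ℝ) (u n : ℕ) : ℝ := F κ δ u (n * κ)

noncomputable def gL (κ δ : ℝ) (u n : ℕ) : ℝ := fL κ δ u (n+1) - fL κ δ u n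

noncomputable def SL (κ δ : ℝ) (U n : ℕ) : ℝ := ∑ u ∈ Finset.range U, gL κ δ u n

lemma fL_rec (hκ : 0 < κ) (u n : ℕ) :
    fL κ δ (u+1) n = (2*κ - δ)/(3*κ) * fL κ δ u (n+1) + (κ + δ)/(3*κ) * fL κ δ u (n - 2) := by
  have h1 : max ((n:ℝ) * κ) 0 = (n:ℝ) * κ := max_eq_left (by positivity)
  have h2 : max ((n:ℝ) * κ - 2*κ) 0 = ((n - 2 : ℕ) : ℝ) * κ := by
    match n with
    | 0 => simp; nlinarith
    | 1 => simp; push_cast; nlinarith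
    | (m+2) =>
      have : ((m+2:ℕ):ℝ) * κ - 2*κ = ((m:ℕ):ℝ) * κ := by push_cast; ring
      rw [this]
      have : (m + 2 - 2 : ℕ) = m := by omega
      rw [this]
      exact max_eq_left (by positivity)
  simp only [fL, F, h1, h2]
  have h3 : (n:ℝ) * κ + κ = ((n+1 : ℕ):ℝ) * κ := by push_cast; ring
  rw [h3]


lemma gL_zero (hκ : 0 < κ) (n : ℕ) : gL κ δ 0 n = κ := by
  simp only [gL, fL, F]
  rw [max_eq_left (by positivity : (0:ℝ) ≤ (n:ℝ)*κ),
    max_eq_left (by positivity : (0:ℝ) ≤ ((n+1:ℕ):ℝ)*κ)]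
  push_cast; ring

lemma gL_rec0 (hκ : 0 < κ) (u : ℕ) :
    gL κ δ (u+1) 0 = (2*κ - δ)/(3*κ) * gL κ δ u 1 := by
  simp only [gL]
  rw [fL_rec hκ u 1, fL_rec hκ u 0]
  norm_num
  ring

lemma gL_rec1 (hκ : 0 < κ) (u : ℕ) :
    gL κ δ (u+1) 1 = (2*κ - δ)/(3*κ) * gL κ δ u 2 := by
  simp only [gL]
  rw [fL_rec hκ u 2, fL_rec hκ u 1]
  norm_num
  ring

lemma gL_rec2 (hκ : 0 < κ) (u n : ℕ) :
    gL κ δ (u+1) (n+2) = (2*κ - δ)/(3*κ) * gL κ δ u (n+3) + (κ + δ)/(3*κ) * gL κ δ u n := by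
  simp only [gL]
  rw [fL_rec hκ u (n+3), fL_rec hκ u (n+2)]
  have e1 : (n + 3 - 2 : ℕ) = n + 1 := by omega
  have e2 : (n + 2 - 2 : ℕ) = n := by omega
  rw [e1, e2]
  ring

end lattice

section lattice2
variable {κ δ : ℝ}

lemma gL_nonneg (hκ : 0 < κ) (hδ : 0 ≤ δ) (hδκ : δ ≤ 2*κ) (u n : ℕ) :
    0 ≤ gL κ δ u n := by
  have h := F_mono hκ hδ hδκ u (show ((n:ℝ) * κ) ≤ ((n+1:ℕ):ℝ) * κ by
    push_cast; nlinarith)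
  simp only [gL, fL]
  linarith

lemma SL_succ (U n : ℕ) : SL κ δ (U+1) n = SL κ δ U n + gL κ δ U n :=
  Finset.sum_range_succ _ _

lemma SL_succ' (U n : ℕ) :
    SL κ δ (U+1) n = (∑ u ∈ Finset.range U, gL κ δ (u+1) n) + gL κ δ 0 n :=
  Finset.sum_range_succ' _ _

lemma SL_bound (hκ : 0 < κ) (hδ : 0 < δ) (hδκ : δ ≤ 2*κ) :
    ∀ U n, SL κ δ U n ≤ ((n:ℝ) + 2) * κ^2 / δ := by
  intro U
  induction U with
  | zero =>
    intro n
    simp only [SL, Finset.range_zero, Finset.sum_empty]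
    positivity
  | succ U ih =>
    intro n
    have hp' := hp (κ := κ) (δ := δ) hκ hδκ
    have hq' := hq (κ := κ) (δ := δ) hκ hδ.le
    match n with
    | 0 =>
      rw [SL_succ' U 0]
      simp_rw [gL_rec0 hκ, gL_zero hκ, ← Finset.mul_sum]
      rw [show (∑ u ∈ Finset.range U, gL κ δ u 1) = SL κ δ U 1 from rfl]
      have h1 := ih 1
      have h2 : (2*κ - δ)/(3*κ) * SL κ δ U 1 ≤ (2*κ - δ)/(3*κ) * (((1:ℝ)+2) * κ^2/δ) := by
        nlinarith
      have h3 : (2*κ - δ)/(3*κ) * (((1:ℝ)+2) * κ^2/δ) + κ = ((0:ℝ) + 2) * κ^2 / δ := by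
        field_simp
        ring
      push_cast
      linarith
    | 1 =>
      rw [SL_succ' U 1]
      simp_rw [gL_rec1 hκ, gL_zero hκ, ← Finset.mul_sum]
      rw [show (∑ u ∈ Finset.range U, gL κ δ u 2) = SL κ δ U 2 from rfl]
      have h1 := ih 2
      have h2 : (2*κ - δ)/(3*κ) * SL κ δ U 2 ≤ (2*κ - δ)/(3*κ) * (((2:ℝ)+2) * κ^2/δ) := by
        nlinarith
      have h3 : ((1:ℝ) + 2) * κ^2/δ - ((2*κ - δ)/(3*κ) * (((2:ℝ)+2) * κ^2/δ) + κ)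
          = (κ^2 + κ*δ)/(3*δ) := by
        field_simp
        ring
      have h4 : (0:ℝ) ≤ (κ^2 + κ*δ)/(3*δ) := by positivity
      push_cast
      linarith
    | (m+2) =>
      rw [SL_succ' U (m+2)]
      simp_rw [gL_rec2 hκ, gL_zero hκ]
      rw [Finset.sum_add_distrib, ← Finset.mul_sum, ← Finset.mul_sum]
      rw [show (∑ u ∈ Finset.range U, gL κ δ u (m+3)) = SL κ δ U (m+3) from rfl]
      rw [show (∑ u ∈ Finset.range U, gL κ δ u m) = SL κ δ U m from rfl]
      have h1 := ih (m+3)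
      have h2 := ih m
      have e1 : (2*κ - δ)/(3*κ) * SL κ δ U (m+3)
          ≤ (2*κ - δ)/(3*κ) * (((m:ℝ)+3+2) * κ^2/δ) := by
        push_cast at h1
        nlinarith
      have e2 : (κ + δ)/(3*κ) * SL κ δ U m ≤ (κ + δ)/(3*κ) * (((m:ℝ)+2) * κ^2/δ) := by
        nlinarith
      have e3 : (2*κ - δ)/(3*κ) * (((m:ℝ)+3+2) * κ^2/δ)
          + (κ + δ)/(3*κ) * (((m:ℝ)+2) * κ^2/δ) + κ = (((m:ℝ))+2+2) * κ^2 / δ := by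
        field_simp
        ring
      push_cast
      linarith

lemma fL_zero_eq (hκ : 0 < κ) :
    ∀ U, fL κ δ U 0 = (2*κ - δ)/(3*κ) * SL κ δ U 0 := by
  intro U
  induction U with
  | zero =>
    simp [fL, SL, F]
  | succ U ih =>
    have h0 : fL κ δ (U+1) 0
        = (2*κ - δ)/(3*κ) * fL κ δ U 1 + (κ + δ)/(3*κ) * fL κ δ U 0 := by
      have := fL_rec (δ := δ) hκ U 0
      simpa using this
    have h1 : fL κ δ U 1 = fL κ δ U 0 + gL κ δ U 0 := by simp [gL]
    have h2 := hpq (κ := κ) (δ := δ) hκ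
    rw [h0, h1, SL_succ U 0, ih]
    linear_combination (SL κ δ U 0 * ((2*κ - δ)/(3*κ))) * h2

lemma F_zero_le (hκ : 0 < κ) (hδ : 0 < δ) (hδκ : δ ≤ 2*κ) (U : ℕ) :
    F κ δ U 0 ≤ 4 * κ^2 / (3*δ) := by
  have h0 : F κ δ U 0 = fL κ δ U 0 := by
    simp [fL]
  rw [h0, fL_zero_eq hκ U]
  have h1 := SL_bound hκ hδ hδκ U 0
  have hp' := hp hκ hδκ
  have hple : (2*κ - δ)/(3*κ) ≤ 2/3 := by
    rw [div_le_div_iff₀ (by linarith) (by norm_num)]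
    nlinarith
  have hSnn : 0 ≤ SL κ δ U 0 := by
    apply Finset.sum_nonneg
    intro u _
    exact gL_nonneg hκ hδ.le hδκ u 0
  have h2 : (2*κ - δ)/(3*κ) * SL κ δ U 0 ≤ (2/3) * (((0:ℝ)+2) * κ^2/δ) := by
    nlinarith
  have h3 : (2/3 : ℝ) * (((0:ℝ)+2) * κ^2/δ) = 4*κ^2/(3*δ) := by
    field_simp
    ring
  linarith

end lattice2

/-- reflected walk driven by `X`. -/
def reflWalk {Ω : Type*} (X : ℕ → Ω → ℝ) : ℕ → Ω → ℝ
  | 0 => fun _ => 0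
  | s+1 => fun ω => max (reflWalk X s ω + X s ω) 0

lemma reflWalk_nonneg {Ω : Type*} (X : ℕ → Ω → ℝ) (s : ℕ) (ω : Ω) :
    0 ≤ reflWalk X s ω := by
  cases s with
  | zero => simp [reflWalk]
  | succ s => exact le_max_right _ _

lemma reflWalk_le {Ω : Type*} (X : ℕ → Ω → ℝ) (c : ℝ) (hc : 0 ≤ c)
    (hX : ∀ s ω, |X s ω| ≤ c) : ∀ s ω, reflWalk X s ω ≤ s * c := by
  intro s
  induction s with
  | zero => intro ω; simp [reflWalk]
  | succ s ih =>
    intro ω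
    have h1 := ih ω
    have h2 := abs_le.mp (hX s ω)
    simp only [reflWalk]
    apply max_le
    · push_cast; nlinarith
    · positivity

lemma sm_sum {Ω : Type*} {m : MeasurableSpace Ω} (s : Finset ℕ) (f : ℕ → Ω → ℝ)
    (h : ∀ i ∈ s, StronglyMeasurable[m] (f i)) :
    StronglyMeasurable[m] (fun ω => ∑ i ∈ s, f i ω) := by
  classical
  induction s using Finset.induction with
  | empty => simpa using stronglyMeasurable_const
  | insert a s' hx ih =>
    simp only [Finset.sum_insert hx]
    exact (h a (Finset.mem_insert_self a s')).add
      (ih fun i hi => h i (Finset.mem_insert_of_mem hi))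

end DriftAux12

open DriftAux12

/-- Generalized drift lemma (Lemma bound-from-drift): for adapted processes `Ψ`, `Z` with
`Ψ 1 = 0`, `Z ≥ 0`, bounded increments, a conditional drift bound `−δ + Z t` above level `B`,
and `Z t ≤ κ`, the expectation of `Ψ t` is bounded by `4κ + B + 2κ²/δ + E[∑_{τ=1}^{t−1} Z τ]`. -/
theorem stmt_12 {Ω : Type*} {m0 : MeasurableSpace Ω} (μ : Measure Ω) [IsProbabilityMeasure μ]
    (ℱ : Filtration ℕ m0) (Ψ Z : ℕ → Ω → ℝ)
    (hΨad : StronglyAdapted ℱ Ψ) (hZad : StronglyAdapted ℱ Z)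
    (hΨ1 : ∀ᵐ ω ∂μ, Ψ 1 ω = 0)
    (hZpos : ∀ t : ℕ, ∀ᵐ ω ∂μ, 0 ≤ Z t ω)
    (κ δ B : ℝ) (hκ : 0 < κ) (hδ : 0 < δ) (hB : 0 < B) (hδκ : δ ≤ 2 * κ)
    (hbdd : ∀ t : ℕ, ∀ᵐ ω ∂μ, |Ψ (t + 1) ω - Ψ t ω| ≤ κ)
    (hdrift : ∀ t : ℕ, ∀ᵐ ω ∂μ, B ≤ Ψ t ω →
      (μ[fun ω => Ψ (t + 1) ω - Ψ t ω | ℱ t]) ω ≤ -δ + Z t ω)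
    (hZbdd : ∀ t : ℕ, ∀ᵐ ω ∂μ, Z t ω ≤ κ)
    (t : ℕ) (ht : 1 ≤ t) :
    ∫ ω, Ψ t ω ∂μ ≤ 4 * κ + B + 2 * κ ^ 2 / δ + ∫ ω, (∑ τ ∈ Finset.Ico 1 t, Z τ ω) ∂μ := by
  classical
  have hml : ∀ s, StronglyMeasurable (Ψ s) := fun s => (hΨad s).mono (ℱ.le s)
  have hmlZ : ∀ s, StronglyMeasurable (Z s) := fun s => (hZad s).mono (ℱ.le s)
  set SZ : ℕ → Ω → ℝ := fun s ω => ∑ τ ∈ Finset.Ico 1 s, Z τ ω with hSZ_def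
  set Γ : ℕ → Ω → ℝ := fun s ω => Ψ s ω - SZ s ω with hΓ_def
  set D : ℕ → Ω → ℝ := fun s ω => Ψ (s+1) ω - Ψ s ω - Z s ω with hD_def
  set Dc : ℕ → Ω → ℝ := fun s ω => max (-(2*κ)) (min (D s ω) κ) with hDc_def
  set X : ℕ → Ω → ℝ :=
    fun s ω => if 1 ≤ s then (if B ≤ Γ s ω then Dc s ω else -δ) else 0 with hX_def
  set R : ℕ → Ω → ℝ := DriftAux12.reflWalk X with hR_def
  have hXb : ∀ s ω, |X s ω| ≤ 2*κ := by
    intro s ω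
    simp only [hX_def]
    by_cases h1 : 1 ≤ s
    · rw [if_pos h1]
      by_cases h2 : B ≤ Γ s ω
      · rw [if_pos h2]
        simp only [hDc_def]
        rw [abs_le]
        refine ⟨le_max_left _ _, ?_⟩
        apply max_le (by linarith)
        exact (min_le_right _ _).trans (by linarith)
      · rw [if_neg h2]
        rw [abs_le]; constructor <;> linarith
    · rw [if_neg h1]
      rw [abs_le]; constructor <;> linarith
  have hXub : ∀ s ω, X s ω ≤ κ := by
    intro s ω
    simp only [hX_def]
    by_cases h1 : 1 ≤ s
    · rw [if_pos h1]
      by_cases h2 : B ≤ Γ s ω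
      · rw [if_pos h2]
        simp only [hDc_def]
        apply max_le (by linarith)
        exact min_le_right _ _
      · rw [if_neg h2]; linarith
    · rw [if_neg h1]; linarith
  have hR0 : ∀ s ω, 0 ≤ R s ω := fun s ω => DriftAux12.reflWalk_nonneg X s ω
  have hRb : ∀ s ω, R s ω ≤ s * (2*κ) :=
    DriftAux12.reflWalk_le X (2*κ) (by linarith) hXb
  have hRsucc : ∀ s ω, R (s+1) ω = max (R s ω + X s ω) 0 := by
    intro s ω; rw [hR_def]; rfl
  have hSZsm : ∀ s, StronglyMeasurable[ℱ s] (SZ s) := by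
    intro s
    apply DriftAux12.sm_sum
    intro τ hτ
    exact (hZad τ).mono (ℱ.mono (le_of_lt (Finset.mem_Ico.mp hτ).2))
  have hΓsm : ∀ s, StronglyMeasurable[ℱ s] (Γ s) := fun s => (hΨad s).sub (hSZsm s)
  have hΓmeas : ∀ s, MeasurableSet[ℱ s] {ω | B ≤ Γ s ω} := fun s =>
    measurableSet_le measurable_const (hΓsm s).measurable
  have hXsm : ∀ s, StronglyMeasurable[ℱ (s+1)] (X s) := by
    intro s
    simp only [hX_def]
    by_cases h1 : 1 ≤ s
    · simp only [if_pos h1]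
      apply StronglyMeasurable.ite ((ℱ.mono (Nat.le_succ s)) _ (hΓmeas s))
      · have hDsm : StronglyMeasurable[ℱ (s+1)] (D s) := by
          simp only [hD_def]
          exact ((hΨad (s+1)).sub ((hΨad s).mono (ℱ.mono (Nat.le_succ s)))).sub
            ((hZad s).mono (ℱ.mono (Nat.le_succ s)))
        simp only [hDc_def]
        exact (continuous_const.max (continuous_id.min continuous_const)).comp_stronglyMeasurable
          hDsm
      · exact stronglyMeasurable_const
    · simp only [if_neg h1]
      exact stronglyMeasurable_const
  have hRsm : ∀ s, StronglyMeasurable[ℱ s] (R s) := by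
    intro s
    induction s with
    | zero =>
      have : R 0 = fun _ => (0:ℝ) := by rw [hR_def]; rfl
      rw [this]; exact stronglyMeasurable_const
    | succ s ih =>
      have : R (s+1) = fun ω => max (R s ω + X s ω) 0 := by
        funext ω; exact hRsucc s ω
      rw [this]
      exact (continuous_id.max continuous_const).comp_stronglyMeasurable
        ((ih.mono (ℱ.mono (Nat.le_succ s))).add (hXsm s))
  have hRm0 : ∀ s, StronglyMeasurable (R s) := fun s => (hRsm s).mono (ℱ.le s)
  have hZint : ∀ s, Integrable (Z s) μ := by
    intro s
    apply Integrable.mono' (integrable_const κ) (hmlZ s).aestronglyMeasurable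
    filter_upwards [hZpos s, hZbdd s] with ω h1 h2
    rw [Real.norm_eq_abs, abs_le]; exact ⟨by linarith, h2⟩
  have hΔint : ∀ s, Integrable (fun ω => Ψ (s+1) ω - Ψ s ω) μ := by
    intro s
    apply Integrable.mono' (integrable_const κ) ((hml (s+1)).sub (hml s)).aestronglyMeasurable
    filter_upwards [hbdd s] with ω h1
    rw [Real.norm_eq_abs]; exact h1
  have hΨint : ∀ s, 1 ≤ s → Integrable (Ψ s) μ := by
    intro s hs
    induction s, hs using Nat.le_induction with
    | base =>
      exact (integrable_zero _ _ _).congr (hΨ1.mono fun ω h => h.symm)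
    | succ s hs ih =>
      have h2 : Integrable (fun ω => Ψ s ω + (Ψ (s+1) ω - Ψ s ω)) μ := ih.add (hΔint s)
      exact h2.congr (Filter.Eventually.of_forall fun ω => by ring)
  have hSZint : ∀ s, Integrable (SZ s) μ := by
    intro s
    simp only [hSZ_def]
    exact integrable_finset_sum _ fun τ _ => hZint τ
  have hΓint : ∀ s, 1 ≤ s → Integrable (Γ s) μ := fun s hs => (hΨint s hs).sub (hSZint s)
  have hFRb : ∀ u s ω, F κ δ u (R s ω) ≤ s * (2*κ) + u * κ := by
    intro u s ω
    have h1 := F_le hκ hδ.le hδκ u (R s ω)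
    rw [max_eq_left (hR0 s ω)] at h1
    have := hRb s ω
    linarith
  have hFint : ∀ u s, Integrable (fun ω => F κ δ u (R s ω)) μ := by
    intro u s
    apply Integrable.mono' (integrable_const ((s : ℝ) * (2*κ) + u * κ))
      ((F_cont u).comp_stronglyMeasurable (hRm0 s)).aestronglyMeasurable
    apply Filter.Eventually.of_forall
    intro ω
    rw [Real.norm_eq_abs, abs_of_nonneg (F_nonneg hκ hδ.le hδκ u _)]
    exact hFRb u s ω
  -- one-step inequality
  have step : ∀ s, 1 ≤ s → ∀ u,
      ∫ ω, F κ δ u (R (s+1) ω) ∂μ ≤ ∫ ω, F κ δ (u+1) (R s ω) ∂μ := by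
    intro s hs u
    set lo : Ω → ℝ := fun ω => F κ δ u (max (R s ω - 2*κ) 0) with hlo_def
    set hi : Ω → ℝ := fun ω => F κ δ u (R s ω + κ) with hhi_def
    set c : Ω → ℝ := fun ω => (hi ω - lo ω)/(3*κ) with hc_def
    set hh : Ω → ℝ := fun ω => if B ≤ Γ s ω then c ω else 0 with hh_def
    have hlohi : ∀ ω, lo ω ≤ hi ω := by
      intro ω
      apply F_mono hκ hδ.le hδκ u
      exact max_le (by linarith [hR0 s ω]) (by linarith [hR0 s ω])
    have hc0 : ∀ ω, 0 ≤ c ω := by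
      intro ω; simp only [hc_def]
      apply div_nonneg (by linarith [hlohi ω]) (by linarith)
    have hlob : ∀ ω, 0 ≤ lo ω ∧ lo ω ≤ (s:ℝ) * (2*κ) + u * κ := by
      intro ω
      refine ⟨F_nonneg hκ hδ.le hδκ u _, ?_⟩
      have h1 := F_le hκ hδ.le hδκ u (max (R s ω - 2*κ) 0)
      rw [max_eq_left (le_max_right _ _)] at h1
      have h2 : max (R s ω - 2*κ) 0 ≤ R s ω := max_le (by linarith) (hR0 s ω)
      have := hRb s ω
      linarith
    have hhib : ∀ ω, 0 ≤ hi ω ∧ hi ω ≤ (s:ℝ) * (2*κ) + κ + u * κ := by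
      intro ω
      refine ⟨F_nonneg hκ hδ.le hδκ u _, ?_⟩
      have h1 := F_le hκ hδ.le hδκ u (R s ω + κ)
      rw [max_eq_left (by linarith [hR0 s ω])] at h1
      have := hRb s ω
      linarith
    have hcb : ∀ ω, |c ω| ≤ ((s:ℝ) * (2*κ) + κ + u * κ)/(3*κ) := by
      intro ω
      simp only [hc_def]
      rw [abs_div, abs_of_nonneg (by linarith : (0:ℝ) ≤ 3*κ),
        abs_of_nonneg (by linarith [hlohi ω] : (0:ℝ) ≤ hi ω - lo ω)]
      gcongr
      linarith [(hhib ω).2, (hlob ω).1]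
    -- measurability of lo, hi, c, hh
    have hRsmm : StronglyMeasurable[ℱ s] (R s) := hRsm s
    have hlosm : StronglyMeasurable[ℱ s] lo := by
      simp only [hlo_def]
      exact ((F_cont u).comp ((continuous_id.sub continuous_const).max
        continuous_const)).comp_stronglyMeasurable hRsmm
    have hhism : StronglyMeasurable[ℱ s] hi := by
      simp only [hhi_def]
      exact ((F_cont u).comp (continuous_id.add continuous_const)).comp_stronglyMeasurable hRsmm
    have hcsm : StronglyMeasurable[ℱ s] c := by
      simp only [hc_def]
      have : (fun ω => (hi ω - lo ω)/(3*κ)) = fun ω => (hi ω - lo ω) * (3*κ)⁻¹ := by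
        funext ω; rw [div_eq_mul_inv]
      rw [this]
      exact (hhism.sub hlosm).mul_const _
    have hhsm : StronglyMeasurable[ℱ s] hh := by
      simp only [hh_def]
      exact StronglyMeasurable.ite (hΓmeas s) hcsm stronglyMeasurable_const
    have hcint : Integrable c μ := by
      apply Integrable.mono' (integrable_const (((s:ℝ) * (2*κ) + κ + u * κ)/(3*κ)))
        ((hcsm.mono (ℱ.le s)).aestronglyMeasurable)
      exact Filter.Eventually.of_forall fun ω => hcb ω
    have hhb : ∀ ω, |hh ω| ≤ ((s:ℝ) * (2*κ) + κ + u * κ)/(3*κ) := by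
      intro ω
      simp only [hh_def]
      by_cases h2 : B ≤ Γ s ω
      · rw [if_pos h2]; exact hcb ω
      · rw [if_neg h2, abs_zero]
        exact (abs_nonneg _).trans (hcb ω)
    have hhint : Integrable hh μ := by
      apply Integrable.mono' (integrable_const (((s:ℝ) * (2*κ) + κ + u * κ)/(3*κ)))
        ((hhsm.mono (ℱ.le s)).aestronglyMeasurable)
      exact Filter.Eventually.of_forall fun ω => hhb ω
    have hh0 : ∀ ω, 0 ≤ hh ω := by
      intro ω; simp only [hh_def]
      by_cases h2 : B ≤ Γ s ω
      · rw [if_pos h2]; exact hc0 ω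
      · rw [if_neg h2]
    -- pointwise chord bound
    have chord : ∀ ω, F κ δ u (R (s+1) ω)
        ≤ (κ * lo ω + 2*κ * hi ω)/(3*κ) + X s ω * c ω := by
      intro ω
      rw [hRsucc s ω]
      have h1 := F_chord hκ hδ.le hδκ u (R s ω) (X s ω) (hR0 s ω)
        (by linarith [(abs_le.mp (hXb s ω)).1]) (hXub s ω)
      exact h1
    -- integrability of the chord majorant pieces
    have hloint : Integrable lo μ := by
      apply Integrable.mono' (integrable_const ((s:ℝ) * (2*κ) + u * κ))
        ((hlosm.mono (ℱ.le s)).aestronglyMeasurable)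
      apply Filter.Eventually.of_forall
      intro ω
      rw [Real.norm_eq_abs, abs_of_nonneg (hlob ω).1]
      exact (hlob ω).2
    have hhiint : Integrable hi μ := by
      apply Integrable.mono' (integrable_const ((s:ℝ) * (2*κ) + κ + u * κ))
        ((hhism.mono (ℱ.le s)).aestronglyMeasurable)
      apply Filter.Eventually.of_forall
      intro ω
      rw [Real.norm_eq_abs, abs_of_nonneg (hhib ω).1]
      exact (hhib ω).2
    have hXm0 : StronglyMeasurable (X s) := (hXsm s).mono (ℱ.le (s+1))
    have hXcint : Integrable (fun ω => X s ω * c ω) μ := by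
      apply Integrable.bdd_mul (c := 2*κ) hcint hXm0.aestronglyMeasurable
      exact Filter.Eventually.of_forall fun ω => by rw [Real.norm_eq_abs]; exact hXb s ω
    -- the conditional-drift integral inequality
    have hhbdd : ∀ᵐ ω ∂μ, ‖hh ω‖ ≤ ((s:ℝ) * (2*κ) + κ + u * κ)/(3*κ) :=
      Filter.Eventually.of_forall fun ω => by rw [Real.norm_eq_abs]; exact hhb ω
    have hDcint : Integrable (fun ω => Dc s ω + δ) μ := by
      apply Integrable.add _ (integrable_const δ)
      have hDsm0 : StronglyMeasurable (D s) := by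
        simp only [hD_def]
        exact ((hml (s+1)).sub (hml s)).sub (hmlZ s)
      apply Integrable.mono' (integrable_const (2*κ))
      · simp only [hDc_def]
        exact ((continuous_const.max (continuous_id.min
          continuous_const)).comp_stronglyMeasurable hDsm0).aestronglyMeasurable
      · apply Filter.Eventually.of_forall
        intro ω
        rw [Real.norm_eq_abs]
        simp only [hDc_def]
        rw [abs_le]
        constructor
        · exact le_max_left _ _
        · apply max_le (by linarith)
          exact (min_le_right _ _).trans (by linarith)
    have hDcDint : Integrable (fun ω => hh ω * (Dc s ω + δ)) μ :=
      Integrable.bdd_mul hDcint ((hhsm.mono (ℱ.le s)).aestronglyMeasurable) hhbdd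
    have keydrift : ∫ ω, X s ω * c ω ∂μ ≤ ∫ ω, (-δ) * c ω ∂μ := by
      have hdecomp : ∀ ω, X s ω * c ω = hh ω * (Dc s ω + δ) + (-δ) * c ω := by
        intro ω
        simp only [hX_def, hh_def]
        rw [if_pos hs]
        by_cases h2 : B ≤ Γ s ω
        · rw [if_pos h2, if_pos h2]; ring
        · rw [if_neg h2, if_neg h2]; ring
      have hintB : Integrable (fun ω => (-δ) * c ω) μ := hcint.const_mul _
      have hmain : ∫ ω, hh ω * (Dc s ω + δ) ∂μ ≤ 0 := by
        have hae1 : (fun ω => hh ω * (Dc s ω + δ)) =ᵐ[μ] (fun ω => hh ω * (D s ω + δ)) := by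
          filter_upwards [hbdd s, hZpos s, hZbdd s] with ω h1 h2 h3
          have hD1 : D s ω ≤ κ := by
            simp only [hD_def]
            have h4 := (abs_le.mp h1).2
            linarith
          have hD2 : -(2*κ) ≤ D s ω := by
            simp only [hD_def]
            have h4 := (abs_le.mp h1).1
            linarith
          have heq : Dc s ω = D s ω := by
            simp only [hDc_def]
            rw [min_eq_left hD1, max_eq_right hD2]
          rw [heq]
        rw [integral_congr_ae hae1]
        have hint1 : Integrable (fun ω => hh ω * (Ψ (s+1) ω - Ψ s ω)) μ :=
          Integrable.bdd_mul (hΔint s) ((hhsm.mono (ℱ.le s)).aestronglyMeasurable) hhbdd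
        have hint2 : Integrable (fun ω => hh ω * Z s ω) μ :=
          Integrable.bdd_mul (hZint s) ((hhsm.mono (ℱ.le s)).aestronglyMeasurable) hhbdd
        have hint3 : Integrable (fun ω => δ * hh ω) μ := hhint.const_mul δ
        have hint12 : Integrable
            (fun ω => hh ω * (Ψ (s+1) ω - Ψ s ω) - hh ω * Z s ω) μ := hint1.sub hint2
        have hintZd : Integrable (fun ω => -δ + Z s ω) μ :=
          (integrable_const (-δ)).add (hZint s)
        have hintA : Integrable (fun ω => hh ω * (-δ + Z s ω)) μ :=
          Integrable.bdd_mul hintZd ((hhsm.mono (ℱ.le s)).aestronglyMeasurable) hhbdd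
        have hintA2 : Integrable (fun ω => hh ω * (-δ + Z s ω) - hh ω * Z s ω) μ :=
          hintA.sub hint2
        have eC : ∫ ω, hh ω * (D s ω + δ) ∂μ
            = ∫ ω, (hh ω * (Ψ (s+1) ω - Ψ s ω) - hh ω * Z s ω + δ * hh ω) ∂μ := by
          apply integral_congr_ae
          apply Filter.Eventually.of_forall
          intro ω
          simp only [hD_def]
          ring
        have eA : ∫ ω, (hh ω * (Ψ (s+1) ω - Ψ s ω) - hh ω * Z s ω + δ * hh ω) ∂μ
            = ∫ ω, (hh ω * (Ψ (s+1) ω - Ψ s ω) - hh ω * Z s ω) ∂μ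
              + ∫ ω, δ * hh ω ∂μ := integral_add hint12 hint3
        have eB : ∫ ω, (hh ω * (Ψ (s+1) ω - Ψ s ω) - hh ω * Z s ω) ∂μ
            = ∫ ω, hh ω * (Ψ (s+1) ω - Ψ s ω) ∂μ - ∫ ω, hh ω * Z s ω ∂μ :=
          integral_sub hint1 hint2
        have hpull : ∫ ω, hh ω * (Ψ (s+1) ω - Ψ s ω) ∂μ
            ≤ ∫ ω, hh ω * (-δ + Z s ω) ∂μ := by
          have e1 : μ[hh * (fun ω => Ψ (s+1) ω - Ψ s ω)|ℱ s]
              =ᵐ[μ] hh * μ[fun ω => Ψ (s+1) ω - Ψ s ω|ℱ s] :=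
            condExp_mul_of_stronglyMeasurable_left hhsm hint1 (hΔint s)
          have e2 : ∫ ω, hh ω * (Ψ (s+1) ω - Ψ s ω) ∂μ
              = ∫ ω, (μ[hh * (fun ω => Ψ (s+1) ω - Ψ s ω)|ℱ s]) ω ∂μ := by
            rw [integral_condExp (ℱ.le s)]
            rfl
          rw [e2, integral_congr_ae e1]
          apply integral_mono_ae (integrable_condExp.congr e1) hintA
          filter_upwards [hdrift s, ae_all_iff.2 hZpos] with ω hd hz
          simp only [Pi.mul_apply]
          by_cases h2 : B ≤ Γ s ω
          · have hBψ : B ≤ Ψ s ω := by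
              have hSZnn : 0 ≤ SZ s ω := by
                simp only [hSZ_def]
                exact Finset.sum_nonneg fun τ _ => hz τ
              simp only [hΓ_def] at h2
              linarith
            exact mul_le_mul_of_nonneg_left (hd hBψ) (hh0 ω)
          · have hzero : hh ω = 0 := by simp only [hh_def]; rw [if_neg h2]
            rw [hzero, zero_mul, zero_mul]
        have eD : ∫ ω, (hh ω * (-δ + Z s ω) - hh ω * Z s ω + δ * hh ω) ∂μ
            = ∫ ω, (hh ω * (-δ + Z s ω) - hh ω * Z s ω) ∂μ + ∫ ω, δ * hh ω ∂μ :=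
          integral_add hintA2 hint3
        have eE : ∫ ω, (hh ω * (-δ + Z s ω) - hh ω * Z s ω) ∂μ
            = ∫ ω, hh ω * (-δ + Z s ω) ∂μ - ∫ ω, hh ω * Z s ω ∂μ :=
          integral_sub hintA hint2
        have eZ : ∫ ω, (hh ω * (-δ + Z s ω) - hh ω * Z s ω + δ * hh ω) ∂μ = 0 := by
          rw [integral_congr_ae (Filter.Eventually.of_forall
            (fun ω => by ring_nf : ∀ ω, hh ω * (-δ + Z s ω) - hh ω * Z s ω + δ * hh ω
              = 0))]
          exact integral_zero _ _
        rw [eC, eA, eB]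
        rw [eD, eE] at eZ
        linarith
      have eE2 : ∫ ω, X s ω * c ω ∂μ
          = ∫ ω, (hh ω * (Dc s ω + δ) + (-δ) * c ω) ∂μ :=
        integral_congr_ae (Filter.Eventually.of_forall hdecomp)
      have eF : ∫ ω, (hh ω * (Dc s ω + δ) + (-δ) * c ω) ∂μ
          = ∫ ω, hh ω * (Dc s ω + δ) ∂μ + ∫ ω, (-δ) * c ω ∂μ :=
        integral_add hDcDint hintB
      rw [eE2, eF]
      linarith
    -- combine the pieces into the one-step inequality
    have hpart1int : Integrable (fun ω => (κ * lo ω + 2*κ * hi ω)/(3*κ)) μ := by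
      have h0 : Integrable (fun ω => κ * lo ω + 2*κ * hi ω) μ :=
        (hloint.const_mul κ).add (hhiint.const_mul (2*κ))
      exact h0.div_const _
    have hmaj : Integrable (fun ω => (κ * lo ω + 2*κ * hi ω)/(3*κ) + X s ω * c ω) μ :=
      hpart1int.add hXcint
    have hstep1 : ∫ ω, F κ δ u (R (s+1) ω) ∂μ
        ≤ ∫ ω, ((κ * lo ω + 2*κ * hi ω)/(3*κ) + X s ω * c ω) ∂μ :=
      integral_mono (hFint u (s+1)) hmaj chord
    have hstep2 : ∫ ω, ((κ * lo ω + 2*κ * hi ω)/(3*κ) + X s ω * c ω) ∂μ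
        = ∫ ω, (κ * lo ω + 2*κ * hi ω)/(3*κ) ∂μ + ∫ ω, X s ω * c ω ∂μ :=
      integral_add hpart1int hXcint
    have hintB2 : Integrable (fun ω => (-δ) * c ω) μ := hcint.const_mul _
    have hstep3a : ∫ ω, ((κ * lo ω + 2*κ * hi ω)/(3*κ) + (-δ) * c ω) ∂μ
        = ∫ ω, (κ * lo ω + 2*κ * hi ω)/(3*κ) ∂μ + ∫ ω, (-δ) * c ω ∂μ :=
      integral_add hpart1int hintB2
    have hstep3b : ∫ ω, ((κ * lo ω + 2*κ * hi ω)/(3*κ) + (-δ) * c ω) ∂μ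
        = ∫ ω, F κ δ (u+1) (R s ω) ∂μ := by
      apply integral_congr_ae
      apply Filter.Eventually.of_forall
      intro ω
      dsimp only
      have hFu : F κ δ (u+1) (R s ω)
          = (2*κ - δ)/(3*κ) * hi ω + (κ + δ)/(3*κ) * lo ω := by
        have h0 : F κ δ (u+1) (R s ω)
            = (2*κ - δ)/(3*κ) * F κ δ u (max (R s ω) 0 + κ)
              + (κ + δ)/(3*κ) * F κ δ u (max (R s ω - 2*κ) 0) := rfl
        rw [h0, max_eq_left (hR0 s ω)]
      rw [hFu]
      simp only [hc_def]
      have h3 : (3:ℝ)*κ ≠ 0 := by positivity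
      field_simp
      ring
    calc ∫ ω, F κ δ u (R (s+1) ω) ∂μ
        ≤ ∫ ω, (κ * lo ω + 2*κ * hi ω)/(3*κ) ∂μ + ∫ ω, X s ω * c ω ∂μ := by
          rw [← hstep2]; exact hstep1
      _ ≤ ∫ ω, (κ * lo ω + 2*κ * hi ω)/(3*κ) ∂μ + ∫ ω, (-δ) * c ω ∂μ := by
          linarith
      _ = ∫ ω, F κ δ (u+1) (R s ω) ∂μ := by rw [← hstep3a, hstep3b]
  -- iterate the one-step inequality
  have chain : ∀ s, 1 ≤ s → s ≤ t →
      ∫ ω, F κ δ (t - s) (R s ω) ∂μ ≤ F κ δ (t-1) 0 := by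
    intro s hs
    induction s, hs using Nat.le_induction with
    | base =>
      intro _
      have hR1 : ∀ ω, R 1 ω = 0 := by
        intro ω
        rw [hRsucc 0 ω]
        have hX0 : X 0 ω = 0 := by
          simp only [hX_def]
          rw [if_neg (by omega : ¬ (1:ℕ) ≤ 0)]
        have hR00 : R 0 ω = 0 := by rw [hR_def]; rfl
        rw [hX0, hR00]
        simp
      have : (fun ω => F κ δ (t - 1) (R 1 ω)) = fun _ => F κ δ (t-1) 0 := by
        funext ω; rw [hR1 ω]
      rw [this, integral_const]
      simp
    | succ s hs ih =>
      intro hst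
      have hst' : s ≤ t := by omega
      have e : t - (s+1) + 1 = t - s := by omega
      calc ∫ ω, F κ δ (t - (s+1)) (R (s+1) ω) ∂μ
          ≤ ∫ ω, F κ δ (t - (s+1) + 1) (R s ω) ∂μ := step s hs (t - (s+1))
        _ = ∫ ω, F κ δ (t - s) (R s ω) ∂μ := by rw [e]
        _ ≤ F κ δ (t-1) 0 := ih hst'
  -- conclusion of the certificate argument
  have hRt : ∫ ω, R t ω ∂μ ≤ F κ δ (t-1) 0 := by
    have h0 := chain t ht le_rfl
    have e : t - t = 0 := by omega
    rw [e] at h0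
    have : (fun ω => F κ δ 0 (R t ω)) = fun ω => R t ω := by
      funext ω
      show max (R t ω) 0 = R t ω
      exact max_eq_left (hR0 t ω)
    rw [this] at h0
    exact h0
  have hF0 : F κ δ (t-1) 0 ≤ 4*κ^2/(3*δ) := F_zero_le hκ hδ hδκ (t-1)
  -- pathwise comparison
  have hpath : ∀ᵐ ω ∂μ, Γ t ω ≤ B + κ + R t ω := by
    filter_upwards [hΨ1, ae_all_iff.2 hbdd, ae_all_iff.2 hZpos, ae_all_iff.2 hZbdd]
      with ω h1 h2 h3 h4
    have key : ∀ s, 1 ≤ s → Γ s ω ≤ B + κ + R s ω := by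
      intro s hs
      induction s, hs using Nat.le_induction with
      | base =>
        have hcalc : Γ 1 ω = 0 := by
          simp only [hΓ_def, hSZ_def]
          rw [Finset.Ico_self, Finset.sum_empty, h1]
          ring
        rw [hcalc]
        have := hR0 1 ω
        linarith
      | succ s hs ih =>
        have hsum : SZ (s+1) ω = SZ s ω + Z s ω := by
          simp only [hSZ_def]
          exact Finset.sum_Ico_succ_top hs _
        have hΓs : Γ (s+1) ω = Γ s ω + D s ω := by
          simp only [hΓ_def, hD_def, hsum]
          ring
        have hD1 : D s ω ≤ κ := by
          simp only [hD_def]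
          have h5 := (abs_le.mp (h2 s)).2
          have h6 := h3 s
          linarith
        have hD2 : -(2*κ) ≤ D s ω := by
          simp only [hD_def]
          have h5 := (abs_le.mp (h2 s)).1
          have h6 := h4 s
          linarith
        have hDceq : Dc s ω = D s ω := by
          simp only [hDc_def]
          rw [min_eq_left hD1, max_eq_right hD2]
        have hRs := hRsucc s ω
        by_cases hb : B ≤ Γ s ω
        · have hXeq : X s ω = D s ω := by
            simp only [hX_def]
            rw [if_pos hs, if_pos hb, hDceq]
          have h7 : R s ω + X s ω ≤ R (s+1) ω := by
            rw [hRs]; exact le_max_left _ _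
          rw [hΓs, ← hXeq]
          linarith
        · push_neg at hb
          have h7 : 0 ≤ R (s+1) ω := hR0 (s+1) ω
          rw [hΓs]
          linarith
    exact key t ht
  -- put everything together
  have hRtint : Integrable (R t) μ := by
    apply Integrable.mono' (integrable_const ((t:ℝ) * (2*κ)))
      (hRm0 t).aestronglyMeasurable
    apply Filter.Eventually.of_forall
    intro ω
    rw [Real.norm_eq_abs, abs_of_nonneg (hR0 t ω)]
    exact hRb t ω
  have hGt : ∫ ω, Γ t ω ∂μ ≤ B + κ + ∫ ω, R t ω ∂μ := by
    have h0 : ∫ ω, Γ t ω ∂μ ≤ ∫ ω, (B + κ + R t ω) ∂μ := by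
      apply integral_mono_ae (hΓint t ht) _ hpath
      exact (integrable_const (B + κ)).add hRtint
    have h1 : ∫ ω, (B + κ + R t ω) ∂μ = (B + κ) + ∫ ω, R t ω ∂μ := by
      rw [integral_add (integrable_const (B+κ)) hRtint, integral_const]
      simp
    linarith
  have hsplitΨ : ∫ ω, Ψ t ω ∂μ = ∫ ω, Γ t ω ∂μ + ∫ ω, SZ t ω ∂μ := by
    have h0 : ∫ ω, (Γ t ω + SZ t ω) ∂μ = ∫ ω, Γ t ω ∂μ + ∫ ω, SZ t ω ∂μ :=
      integral_add (hΓint t ht) (hSZint t)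
    rw [← h0]
    apply integral_congr_ae
    apply Filter.Eventually.of_forall
    intro ω
    simp only [hΓ_def]
    ring
  have hfinalnum : 4*κ^2/(3*δ) ≤ 2*κ^2/δ := by
    rw [div_le_div_iff₀ (by positivity) hδ]
    nlinarith [sq_nonneg κ]
  have hgoal : ∫ ω, Ψ t ω ∂μ ≤ 4 * κ + B + 2 * κ ^ 2 / δ + ∫ ω, SZ t ω ∂μ := by
    have h2κ : 0 < 2*κ^2/δ := by positivity
    calc ∫ ω, Ψ t ω ∂μ = ∫ ω, Γ t ω ∂μ + ∫ ω, SZ t ω ∂μ := hsplitΨ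
      _ ≤ (B + κ + ∫ ω, R t ω ∂μ) + ∫ ω, SZ t ω ∂μ := by linarith
      _ ≤ (B + κ + 4*κ^2/(3*δ)) + ∫ ω, SZ t ω ∂μ := by linarith [hRt.trans hF0]
      _ ≤ 4 * κ + B + 2 * κ ^ 2 / δ + ∫ ω, SZ t ω ∂μ := by linarith
  exact hgoal
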